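/- arXiv:1402.4967 — 3 statements merged into one kernel-verified Lean document; each statement's English description precedes it below -/
import Mathlib

section
/- Let I = [a,b], d = b−a, A the Dirichlet Laplacian on L²(I), and τ : D(A) → ℂ², τu := (u'(a), −u'(b)). Define G := (τ(−A)^{-1})* : ℂ² → L²(I). Then (Gξ)(x) = (ξ₁(b−x) + ξ₂(x−a))/d, and G*G equals the 2×2 matrix d·[[1/3, 1/6],[1/6, 1/3]]; in particular G*G is positive definite with eigenvalues d/2 and d/6. -/
open MeasureTheory Set

/-- The map `G : ℂ² → L²(a,b)`, `(G ξ)(x) = (ξ₁(b−x) + ξ₂(x−a))/d`, `d = b−a`. -/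
noncomputable def gfun (a b : ℝ) (ξ : ℂ × ℂ) (x : ℝ) : ℂ :=
  (ξ.1 * ((b - x : ℝ) : ℂ) + ξ.2 * ((x - a : ℝ) : ℂ)) / ((b - a : ℝ) : ℂ)

lemma quad_int (a b c0 c1 c2 : ℝ) :
    ∫ x in a..b, (c2*x^2 + c1*x + c0) =
      c2*(b^3-a^3)/3 + c1*(b^2-a^2)/2 + c0*(b-a) := by
  have h2 : ∫ x in a..b, x^2 = (b^3-a^3)/3 := by
    rw [integral_pow]; norm_num
  have h1 : ∫ x in a..b, x = (b^2-a^2)/2 := by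
    simpa using integral_pow (a:=a) (b:=b) 1
  rw [intervalIntegral.integral_add, intervalIntegral.integral_add,
    intervalIntegral.integral_const_mul, intervalIntegral.integral_const_mul,
    intervalIntegral.integral_const, h1, h2, smul_eq_mul]
  · ring
  all_goals apply Continuous.intervalIntegrable; continuity

lemma cint1 (a b : ℝ) : ∫ x in a..b, (((b-x)^2 : ℝ) : ℂ) = (((b-a)^3/3 : ℝ) : ℂ) := by
  rw [intervalIntegral.integral_ofReal]
  norm_cast
  have : ∀ x : ℝ, (b-x)^2 = 1*x^2 + (-(2*b))*x + b^2 := fun x => by ring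
  simp only [this, quad_int]
  ring

lemma cint2 (a b : ℝ) : ∫ x in a..b, (((x-a)^2 : ℝ) : ℂ) = (((b-a)^3/3 : ℝ) : ℂ) := by
  rw [intervalIntegral.integral_ofReal]
  norm_cast
  have : ∀ x : ℝ, (x-a)^2 = 1*x^2 + (-(2*a))*x + a^2 := fun x => by ring
  simp only [this, quad_int]
  ring

lemma cint3 (a b : ℝ) : ∫ x in a..b, ((((b-x)*(x-a)) : ℝ) : ℂ) = (((b-a)^3/6 : ℝ) : ℂ) := by
  rw [intervalIntegral.integral_ofReal]
  norm_cast
  have : ∀ x : ℝ, (b-x)*(x-a) = (-1)*x^2 + (a+b)*x + (-(a*b)) := fun x => by ring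
  simp only [this, quad_int]
  ring

lemma bddmul_int (a b : ℝ) (hab : a ≤ b) (f : ℝ → ℂ) (h : IntegrableOn f (Icc a b) volume)
    (g : ℝ → ℝ) (hg : Continuous g) (hbd : ∀ x ∈ Icc a b, |g x| ≤ |a| + |b|) :
    IntervalIntegrable (fun x => ((g x : ℝ) : ℂ) * f x) volume a b := by
  rw [intervalIntegrable_iff_integrableOn_Ioc_of_le hab]
  refine IntegrableOn.mono_set ?_ Ioc_subset_Icc_self
  refine Integrable.bdd_mul (c := |a| + |b|) h
    (Complex.continuous_ofReal.comp hg).aestronglyMeasurable.restrict ?_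
  filter_upwards [ae_restrict_mem measurableSet_Icc] with x hx
  simpa using hbd x hx


set_option maxHeartbeats 1000000 in
lemma gram_lemma (a b : ℝ) (hab : a < b) (ξ ζ : ℂ × ℂ) :
    (∫ x in a..b, (starRingEnd ℂ) (gfun a b ξ x) * gfun a b ζ x)
      = ((b - a : ℝ) : ℂ) *
          ((1 / 3) * ((starRingEnd ℂ) ξ.1 * ζ.1 + (starRingEnd ℂ) ξ.2 * ζ.2)
            + (1 / 6) * ((starRingEnd ℂ) ξ.1 * ζ.2 + (starRingEnd ℂ) ξ.2 * ζ.1)) := by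
  have hd : (0:ℝ) < b - a := by linarith
  have hdc : ((b - a : ℝ) : ℂ) ≠ 0 := (Complex.ofReal_ne_zero).2 (ne_of_gt hd)
  have key : ∀ x : ℝ, (starRingEnd ℂ) (gfun a b ξ x) * gfun a b ζ x =
      ((starRingEnd ℂ) ξ.1 * ζ.1 / ((b-a:ℝ):ℂ)^2) * (((b-x)^2 : ℝ) : ℂ)
      + ((starRingEnd ℂ) ξ.2 * ζ.2 / ((b-a:ℝ):ℂ)^2) * (((x-a)^2 : ℝ) : ℂ)
      + (((starRingEnd ℂ) ξ.1 * ζ.2 + (starRingEnd ℂ) ξ.2 * ζ.1) / ((b-a:ℝ):ℂ)^2)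
          * ((((b-x)*(x-a)) : ℝ) : ℂ) := by
    intro x
    simp only [gfun, map_div₀, map_add, map_mul, Complex.conj_ofReal]
    rw [div_mul_div_comm, ← sq]
    simp only [div_mul_eq_mul_div, ← add_div]
    congr 1
    push_cast
    ring
  have i1 : IntervalIntegrable
      (fun x => ((starRingEnd ℂ) ξ.1 * ζ.1 / ((b-a:ℝ):ℂ)^2) * (((b-x)^2 : ℝ) : ℂ))
      volume a b :=
    (Continuous.mul continuous_const
      (Complex.continuous_ofReal.comp (by continuity))).intervalIntegrable _ _
  have i2 : IntervalIntegrable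
      (fun x => ((starRingEnd ℂ) ξ.2 * ζ.2 / ((b-a:ℝ):ℂ)^2) * (((x-a)^2 : ℝ) : ℂ))
      volume a b :=
    (Continuous.mul continuous_const
      (Complex.continuous_ofReal.comp (by continuity))).intervalIntegrable _ _
  have i3 : IntervalIntegrable
      (fun x => (((starRingEnd ℂ) ξ.1 * ζ.2 + (starRingEnd ℂ) ξ.2 * ζ.1) / ((b-a:ℝ):ℂ)^2)
        * ((((b-x)*(x-a)) : ℝ) : ℂ)) volume a b :=
    (Continuous.mul continuous_const
      (Complex.continuous_ofReal.comp (by continuity))).intervalIntegrable _ _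
  simp only [key]
  rw [intervalIntegral.integral_add (i1.add i2) i3, intervalIntegral.integral_add i1 i2,
    intervalIntegral.integral_const_mul, intervalIntegral.integral_const_mul,
    intervalIntegral.integral_const_mul, cint1, cint2, cint3]
  have e1 : (((b-a)^3/3 : ℝ):ℂ) = ((b-a:ℝ):ℂ)^3/3 := by push_cast; ring
  have e2 : (((b-a)^3/6 : ℝ):ℂ) = ((b-a:ℝ):ℂ)^3/6 := by push_cast; ring
  rw [e1, e2]
  have habs : ∀ A B C D : ℂ, D ≠ 0 →
      A/D^2*(D^3/3) + B/D^2*(D^3/3) + C/D^2*(D^3/6) = D*(1/3*(A+B)+1/6*C) := by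
    intro A B C D hD
    field_simp
  exact habs _ _ _ _ hdc

set_option maxHeartbeats 1000000 in
/-- On `I = [a,b]`, `d = b−a > 0`, with `A` the Dirichlet Laplacian and
`τ u := (u'(a), −u'(b))`, the operator `G := (τ(−A)⁻¹)* : ℂ² → L²(I)` is given by
`(Gξ)(x) = (ξ₁(b−x) + ξ₂(x−a))/d`: it satisfies the adjoint identity
`⟨Gξ, f⟩_{L²} = ⟨ξ, G*f⟩_{ℂ²}` with `G*f = (1/d)(∫(b−x)f, ∫(x−a)f)`; moreover
`G*G = d·[[1/3,1/6],[1/6,1/3]]` (as a sesquilinear form on `ℂ²`), which is positive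
definite with eigenvalues `d/2` (eigenvector `(1,1)`) and `d/6` (eigenvector `(1,−1)`). -/
theorem stmt_13 (a b : ℝ) (hab : a < b) :
    (∀ (ξ : ℂ × ℂ) (f : ℝ → ℂ), MemLp f 2 (volume.restrict (Icc a b)) →
      (∫ x in a..b, (starRingEnd ℂ) (gfun a b ξ x) * f x)
        = (starRingEnd ℂ) ξ.1 * (((b - a : ℝ) : ℂ)⁻¹ *
              ∫ x in a..b, ((b - x : ℝ) : ℂ) * f x)
          + (starRingEnd ℂ) ξ.2 * (((b - a : ℝ) : ℂ)⁻¹ *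
              ∫ x in a..b, ((x - a : ℝ) : ℂ) * f x)) ∧
    (∀ ξ ζ : ℂ × ℂ,
      (∫ x in a..b, (starRingEnd ℂ) (gfun a b ξ x) * gfun a b ζ x)
        = ((b - a : ℝ) : ℂ) *
            ((1 / 3) * ((starRingEnd ℂ) ξ.1 * ζ.1 + (starRingEnd ℂ) ξ.2 * ζ.2)
              + (1 / 6) * ((starRingEnd ℂ) ξ.1 * ζ.2 + (starRingEnd ℂ) ξ.2 * ζ.1))) ∧
    (∀ ξ : ℂ × ℂ, ξ ≠ 0 →
      0 < (∫ x in a..b, (starRingEnd ℂ) (gfun a b ξ x) * gfun a b ξ x).re) ∧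
    (((b - a : ℝ) : ℂ) • (Matrix.of ![![(1 : ℂ) / 3, 1 / 6], ![1 / 6, 1 / 3]])).mulVec
        ![1, 1] = (((b - a) / 2 : ℝ) : ℂ) • ![1, 1] ∧
    (((b - a : ℝ) : ℂ) • (Matrix.of ![![(1 : ℂ) / 3, 1 / 6], ![1 / 6, 1 / 3]])).mulVec
        ![1, -1] = (((b - a) / 6 : ℝ) : ℂ) • ![1, -1] := by
  have hd : (0:ℝ) < b - a := by linarith
  have hdc : ((b - a : ℝ) : ℂ) ≠ 0 := by
    exact_mod_cast (Complex.ofReal_ne_zero).2 (ne_of_gt hd)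
  have part2 : ∀ ξ ζ : ℂ × ℂ,
      (∫ x in a..b, (starRingEnd ℂ) (gfun a b ξ x) * gfun a b ζ x)
        = ((b - a : ℝ) : ℂ) *
            ((1 / 3) * ((starRingEnd ℂ) ξ.1 * ζ.1 + (starRingEnd ℂ) ξ.2 * ζ.2)
              + (1 / 6) * ((starRingEnd ℂ) ξ.1 * ζ.2 + (starRingEnd ℂ) ξ.2 * ζ.1)) :=
    fun ξ ζ => gram_lemma a b hab ξ ζ
  refine ⟨?_, part2, ?_, ?_, ?_⟩
  · intro ξ f hf
    have hfin : IsFiniteMeasure (volume.restrict (Icc a b)) := by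
      refine ⟨?_⟩
      rw [Measure.restrict_apply_univ]
      exact measure_Icc_lt_top
    have hint : IntegrableOn f (Icc a b) volume := hf.integrable (by norm_num)
    have h1 : IntervalIntegrable (fun x => ((b - x : ℝ) : ℂ) * f x) volume a b := by
      refine bddmul_int a b hab.le f hint _ (by continuity) ?_
      intro x hx
      have h1 := hx.1; have h2 := hx.2
      have := neg_abs_le a; have := le_abs_self b
      rw [abs_le]; constructor <;> nlinarith [abs_nonneg a, abs_nonneg b]
    have h2 : IntervalIntegrable (fun x => ((x - a : ℝ) : ℂ) * f x) volume a b := by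
      refine bddmul_int a b hab.le f hint _ (by continuity) ?_
      intro x hx
      have h1 := hx.1; have h2 := hx.2
      have := neg_abs_le a; have := le_abs_self b
      rw [abs_le]; constructor <;> nlinarith [abs_nonneg a, abs_nonneg b]
    have key : ∀ x : ℝ, (starRingEnd ℂ) (gfun a b ξ x) * f x =
        ((starRingEnd ℂ) ξ.1 * ((b - a : ℝ) : ℂ)⁻¹) * (((b - x : ℝ) : ℂ) * f x)
        + ((starRingEnd ℂ) ξ.2 * ((b - a : ℝ) : ℂ)⁻¹) * (((x - a : ℝ) : ℂ) * f x) := by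
      intro x
      simp only [gfun, map_div₀, map_add, map_mul, Complex.conj_ofReal]
      field_simp
    simp only [key]
    rw [intervalIntegral.integral_add (h1.const_mul _) (h2.const_mul _),
      intervalIntegral.integral_const_mul, intervalIntegral.integral_const_mul]
    ring
  · intro ξ hξ
    rw [part2 ξ ξ]
    obtain ⟨z, w⟩ := ξ
    have hne : z ≠ 0 ∨ w ≠ 0 := by
      by_contra h
      push_neg at h
      exact hξ (Prod.ext h.1 h.2)
    have hre : (((b - a : ℝ) : ℂ) *
        ((1 / 3) * ((starRingEnd ℂ) z * z + (starRingEnd ℂ) w * w)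
          + (1 / 6) * ((starRingEnd ℂ) z * w + (starRingEnd ℂ) w * z))).re
        = (b - a) * ((1/3) * (z.re^2 + z.im^2 + w.re^2 + w.im^2)
            + (1/3) * (z.re*w.re + z.im*w.im)) := by
      simp [Complex.mul_re, Complex.mul_im, Complex.div_re, Complex.div_im,
        Complex.normSq_apply]
      left
      ring
    rw [hre]
    have h1 : z.re^2 + z.im^2 + w.re^2 + w.im^2 > 0 := by
      rcases hne with h | h
      · have : z.re ≠ 0 ∨ z.im ≠ 0 := by
          by_contra hc; push_neg at hc
          exact h (Complex.ext hc.1 hc.2)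
        rcases this with h' | h' <;>
          nlinarith [sq_nonneg z.re, sq_nonneg z.im, sq_nonneg w.re, sq_nonneg w.im,
            sq_pos_of_ne_zero h']
      · have : w.re ≠ 0 ∨ w.im ≠ 0 := by
          by_contra hc; push_neg at hc
          exact h (Complex.ext hc.1 hc.2)
        rcases this with h' | h' <;>
          nlinarith [sq_nonneg z.re, sq_nonneg z.im, sq_nonneg w.re, sq_nonneg w.im,
            sq_pos_of_ne_zero h']
    have hd : (0:ℝ) < b - a := by linarith
    nlinarith [sq_nonneg (z.re + w.re), sq_nonneg (z.im + w.im), mul_pos hd h1]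
  · funext i
    fin_cases i <;>
      simp [Matrix.mulVec, dotProduct, Fin.sum_univ_two] <;> push_cast <;> ring
  · funext i
    fin_cases i <;>
      simp [Matrix.mulVec, dotProduct, Fin.sum_univ_two] <;> push_cast <;> ring
end

section
/- Let {x_n}_{n∈ℕ} ⊂ ℝ be strictly increasing with d_n := x_{n+1} − x_n, and for each n let τ_n u := (u'(x_n), −u'(x_{n+1})) act on the Dirichlet domain D(A_n) on [x_n, x_{n+1}]. Then the direct sum trace map ⊕_n τ_n is bounded and surjective from ⊕_n D(A_n) onto the weighted space ℓ²_d(ℕ) ⊕ ℓ²_d(ℕ), where ℓ²_d(ℕ) := {(s_n) : Σ_n |s_n|²/d_n < ∞}. Moreover ℓ²_d(ℕ) = ℓ²(ℕ) (with equivalent norms) if and only if 0 < inf_n d_n ≤ sup_n d_n < ∞. -/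
open MeasureTheory Set

/-- Membership in the Dirichlet domain `D(A)` on `[a,b]`:
`u ∈ C¹([a,b])` with derivative `u'`, `u'` absolutely continuous with density
`g = u'' ∈ L²(a,b)`, and `u(a) = u(b) = 0`. -/

def IsDirDom (a b : ℝ) (u u' g : ℝ → ℂ) : Prop :=
  (∀ x ∈ Icc a b, HasDerivWithinAt u (u' x) (Icc a b) x) ∧
  (∀ x ∈ Icc a b, u' x = u' a + ∫ t in a..x, g t) ∧
  MemLp g 2 (volume.restrict (Ioo a b)) ∧
  u a = 0 ∧ u b = 0

lemma trace_bound {a b : ℝ} (hab : a < b) {u u' g : ℝ → ℂ}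
    (h : IsDirDom a b u u' g) :
    (‖u' a‖ ^ 2 + ‖u' b‖ ^ 2) / (b - a) ≤ 9 * ∫ t in a..b, ‖g t‖ ^ 2 := by
  obtain ⟨hu, hu', hg, ha0, hb0⟩ := h
  have hd : (0:ℝ) < b - a := sub_pos.mpr hab
  haveI : IsFiniteMeasure (volume.restrict (Ioo a b)) :=
    ⟨by rw [Measure.restrict_apply_univ, Real.volume_Ioo]; exact ENNReal.ofReal_lt_top⟩
  -- integrability of g
  have hg1 : Integrable g (volume.restrict (Ioo a b)) :=
    memLp_one_iff_integrable.mp (hg.mono_exponent (by norm_num))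
  have hgIcc : IntegrableOn g (Icc a b) volume := IntegrableOn.congr_set_ae hg1 Ioo_ae_eq_Icc.symm
  have hgi : IntervalIntegrable g volume a b := by
    rw [← uIcc_of_le hab.le] at hgIcc; exact hgIcc.intervalIntegrable
  -- Cauchy-Schwarz: K^2 ≤ (b-a) * I
  set K : ℝ := ∫ t in a..b, ‖g t‖ with hK
  set I : ℝ := ∫ t in a..b, ‖g t‖ ^ 2 with hI
  have hKnn : 0 ≤ K := intervalIntegral.integral_nonneg hab.le (fun t _ => norm_nonneg _)
  have hInn : 0 ≤ I := intervalIntegral.integral_nonneg hab.le (fun t _ => sq_nonneg _)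
  have holder := MeasureTheory.integral_mul_norm_le_Lp_mul_Lq
      (μ := volume.restrict (Ioo a b)) (f := g) (g := fun _ => (1:ℂ)) (p := 2) (q := 2)
      ⟨by norm_num, by norm_num, by norm_num⟩
      (by rw [show ENNReal.ofReal 2 = 2 by norm_num]; exact hg)
      (by exact memLp_const 1)
  simp only [Nat.cast_one, norm_one, mul_one, Real.one_rpow] at holder
  have e2 : (∫ _t, (1:ℝ) ∂(volume.restrict (Ioo a b))) = b - a := by
    simp [MeasureTheory.integral_const, Measure.restrict_apply_univ, Real.volume_Ioo,
      ENNReal.toReal_ofReal hd.le, hab.le]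
  rw [e2] at holder
  have hKIoo : K = ∫ t in Ioo a b, ‖g t‖ := by
    rw [hK, intervalIntegral.integral_of_le hab.le]
    exact (setIntegral_congr_set (Ioo_ae_eq_Ioc (μ := volume) (a := a) (b := b))).symm
  have hIIoo : I = ∫ t in Ioo a b, ‖g t‖ ^ (2:ℝ) := by
    rw [hI, intervalIntegral.integral_of_le hab.le,
      ← setIntegral_congr_set (Ioo_ae_eq_Ioc (μ := volume) (a := a) (b := b))]
    refine setIntegral_congr_fun measurableSet_Ioo fun t _ => ?_
    rw [show ((2:ℝ)) = ((2:ℕ):ℝ) by norm_num, Real.rpow_natCast]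
  have hCS : K ^ 2 ≤ (b - a) * I := by
    rw [← hKIoo, ← hIIoo, ← Real.sqrt_eq_rpow, ← Real.sqrt_eq_rpow] at holder
    nlinarith [Real.sq_sqrt hInn, Real.sq_sqrt hd.le, Real.sqrt_nonneg I,
      Real.sqrt_nonneg (b - a), holder, hKnn]
  -- primitive F of g
  have hFcont : ContinuousOn (fun y => ∫ t in a..y, g t) (Icc a b) := by
    have := intervalIntegral.continuousOn_primitive_interval (μ := volume) (f := g)
      (a := a) (b := b) (by rw [uIcc_of_le hab.le]; exact hgIcc)
    rwa [uIcc_of_le hab.le] at this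
  have hFb : ∀ y ∈ Icc a b, ‖∫ t in a..y, g t‖ ≤ K := fun y hy =>
    le_trans (intervalIntegral.norm_integral_le_integral_norm hy.1)
      (intervalIntegral.integral_mono_interval le_rfl hy.1 hy.2
        (ae_of_all _ fun t => norm_nonneg _) hgi.norm)
  have hu'cont : ContinuousOn u' (Icc a b) :=
    (continuousOn_const.add hFcont).congr fun y hy => hu' y hy
  have hu'i : IntervalIntegrable u' volume a b := by
    rw [← uIcc_of_le hab.le] at hu'cont; exact hu'cont.intervalIntegrable
  have hFi : IntervalIntegrable (fun y => ∫ t in a..y, g t) volume a b := by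
    rw [← uIcc_of_le hab.le] at hFcont; exact hFcont.intervalIntegrable
  have hftc : ∫ y in a..b, u' y = 0 := by
    rw [intervalIntegral.integral_eq_sub_of_hasDeriv_right_of_le hab.le
      (fun y hy => (hu y hy).continuousWithinAt)
      (fun y hy => ((hu y (Ioo_subset_Icc_self hy)).hasDerivAt
        (Icc_mem_nhds hy.1 hy.2)).hasDerivWithinAt) hu'i, ha0, hb0, sub_zero]
  set J : ℂ := ∫ y in a..b, (∫ t in a..y, g t) with hJdef
  have hsplit : ∫ y in a..b, u' y = (b - a) • u' a + J := by
    rw [intervalIntegral.integral_congr (g := fun y => u' a + ∫ t in a..y, g t)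
        (by rw [uIcc_of_le hab.le]; exact fun y hy => hu' y hy),
      intervalIntegral.integral_add intervalIntegrable_const hFi,
      intervalIntegral.integral_const]
  have hJ : ‖J‖ ≤ K * (b - a) := by
    have := intervalIntegral.norm_integral_le_of_norm_le_const (C := K)
      (f := fun y => ∫ t in a..y, g t) (a := a) (b := b)
      (fun y hy => hFb y (by rw [uIoc_of_le hab.le] at hy; exact ⟨hy.1.le, hy.2⟩))
    rwa [abs_of_pos hd] at this
  have hua : ‖u' a‖ ≤ K := by
    have h0 : (b - a) • u' a = -J := by
      have h1 := hsplit.symm.trans hftc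
      have : (b - a) • u' a + J = 0 := h1
      linear_combination this
    have h2 : ‖(b - a) • u' a‖ = (b - a) * ‖u' a‖ := by
      rw [norm_smul, Real.norm_eq_abs, abs_of_pos hd]
    rw [h0, norm_neg] at h2
    have : (b - a) * ‖u' a‖ ≤ K * (b - a) := h2 ▸ hJ
    nlinarith
  have hub : ‖u' b‖ ≤ 2 * K := by
    rw [hu' b (right_mem_Icc.mpr hab.le)]
    calc ‖u' a + ∫ t in a..b, g t‖ ≤ ‖u' a‖ + ‖∫ t in a..b, g t‖ := norm_add_le _ _
    _ ≤ 2 * K := by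
      have := hFb b (right_mem_Icc.mpr hab.le)
      linarith
  rw [div_le_iff₀ hd]
  nlinarith [hCS, hua, hub, norm_nonneg (u' a), norm_nonneg (u' b), hKnn, hInn, hd,
    sq_nonneg (K - ‖u' a‖), sq_nonneg (2*K - ‖u' b‖)]

noncomputable def cubA (a b : ℝ) (p q : ℂ) : ℂ := (p + q) / ((b - a : ℝ) : ℂ) ^ 2
noncomputable def cubB (a b : ℝ) (p q : ℂ) : ℂ := -(2 * p + q) / ((b - a : ℝ) : ℂ)
noncomputable def cubU (a b : ℝ) (p q : ℂ) : ℝ → ℂ := fun y =>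
  cubA a b p q * ((y - a : ℝ) : ℂ) ^ 3 + cubB a b p q * ((y - a : ℝ) : ℂ) ^ 2 + p * ((y - a : ℝ) : ℂ)
noncomputable def cubU' (a b : ℝ) (p q : ℂ) : ℝ → ℂ := fun y =>
  3 * cubA a b p q * ((y - a : ℝ) : ℂ) ^ 2 + 2 * cubB a b p q * ((y - a : ℝ) : ℂ) + p
noncomputable def cubG (a b : ℝ) (p q : ℂ) : ℝ → ℂ := fun y =>
  6 * cubA a b p q * ((y - a : ℝ) : ℂ) + 2 * cubB a b p q

lemma poly3_hasDerivAt (A B C : ℂ) (a y : ℝ) :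
    HasDerivAt (fun y : ℝ => A * ((y - a : ℝ) : ℂ) ^ 3 + B * ((y - a : ℝ) : ℂ) ^ 2
        + C * ((y - a : ℝ) : ℂ))
      (3 * A * ((y - a : ℝ) : ℂ) ^ 2 + 2 * B * ((y - a : ℝ) : ℂ) + C) y := by
  have h1 : HasDerivAt (fun z : ℂ => z - (a : ℂ)) 1 (y : ℂ) := (hasDerivAt_id _).sub_const _
  have h : HasDerivAt (fun z : ℂ => A * (z - (a:ℂ)) ^ 3 + B * (z - a) ^ 2 + C * (z - a))
      (3 * A * ((y:ℂ) - a) ^ 2 + 2 * B * ((y:ℂ) - a) + C) (y : ℂ) := by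
    have := (((h1.pow 3).const_mul A).add ((h1.pow 2).const_mul B)).add (h1.const_mul C)
    exact this.congr_deriv (by push_cast; ring)
  have h2 := h.comp_ofReal
  have hfun : (fun y : ℝ => A * ((y:ℂ) - a) ^ 3 + B * ((y:ℂ) - a) ^ 2 + C * ((y:ℂ) - a))
      = fun y : ℝ => A * ((y - a : ℝ) : ℂ) ^ 3 + B * ((y - a : ℝ) : ℂ) ^ 2
        + C * ((y - a : ℝ) : ℂ) := by
    funext t; push_cast; ring
  rw [hfun] at h2
  convert h2 using 1
  push_cast; ring

lemma poly2_hasDerivAt (A B C : ℂ) (a y : ℝ) :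
    HasDerivAt (fun y : ℝ => A * ((y - a : ℝ) : ℂ) ^ 2 + B * ((y - a : ℝ) : ℂ) + C)
      (2 * A * ((y - a : ℝ) : ℂ) + B) y := by
  have h1 : HasDerivAt (fun z : ℂ => z - (a : ℂ)) 1 (y : ℂ) := (hasDerivAt_id _).sub_const _
  have h : HasDerivAt (fun z : ℂ => A * (z - (a:ℂ)) ^ 2 + B * (z - a) + C)
      (2 * A * ((y:ℂ) - a) + B) (y : ℂ) := by
    have := (((h1.pow 2).const_mul A).add (h1.const_mul B)).add_const C
    exact this.congr_deriv (by push_cast; ring)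
  have h2 := h.comp_ofReal
  have hfun : (fun y : ℝ => A * ((y:ℂ) - a) ^ 2 + B * ((y:ℂ) - a) + C)
      = fun y : ℝ => A * ((y - a : ℝ) : ℂ) ^ 2 + B * ((y - a : ℝ) : ℂ) + C := by
    funext t; push_cast; ring
  rw [hfun] at h2
  convert h2 using 1
  push_cast; ring

lemma cubU_deriv (a b : ℝ) (p q : ℂ) (y : ℝ) :
    HasDerivAt (cubU a b p q) (cubU' a b p q y) y :=
  poly3_hasDerivAt _ _ _ a y

lemma cubU'_deriv (a b : ℝ) (p q : ℂ) (y : ℝ) :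
    HasDerivAt (cubU' a b p q) (cubG a b p q y) y := by
  have := poly2_hasDerivAt (3 * cubA a b p q) (2 * cubB a b p q) p a y
  exact this.congr_deriv (by simp only [cubG]; ring)

lemma cubG_cont (a b : ℝ) (p q : ℂ) : Continuous (cubG a b p q) := by
  unfold cubG; fun_prop

lemma cubG_norm_le {a b : ℝ} (hab : a < b) (p q : ℂ) {y : ℝ} (hy : y ∈ Icc a b) :
    ‖cubG a b p q y‖ ≤ (10 * ‖p‖ + 8 * ‖q‖) / (b - a) := by
  have hd : (0:ℝ) < b - a := sub_pos.mpr hab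
  have hA : ‖cubA a b p q‖ = ‖p + q‖ / (b - a) ^ 2 := by
    rw [cubA, norm_div, norm_pow, Complex.norm_real, Real.norm_eq_abs, abs_of_pos hd]
  have hB : ‖cubB a b p q‖ = ‖2 * p + q‖ / (b - a) := by
    rw [cubB, norm_div, norm_neg, Complex.norm_real, Real.norm_eq_abs, abs_of_pos hd]
  have hz : ‖((y - a : ℝ) : ℂ)‖ ≤ b - a := by
    rw [Complex.norm_real, Real.norm_eq_abs, abs_of_nonneg (by linarith [hy.1])]
    linarith [hy.2]
  calc ‖cubG a b p q y‖ ≤ ‖6 * cubA a b p q * ((y - a : ℝ) : ℂ)‖ + ‖2 * cubB a b p q‖ :=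
        norm_add_le _ _
  _ = 6 * ‖cubA a b p q‖ * ‖((y - a : ℝ) : ℂ)‖ + 2 * ‖cubB a b p q‖ := by
        simp [norm_mul]
  _ ≤ 6 * (‖p + q‖ / (b - a) ^ 2) * (b - a) + 2 * (‖2 * p + q‖ / (b - a)) := by
        rw [hA, hB]; gcongr
  _ = (6 * ‖p + q‖ + 2 * ‖2 * p + q‖) / (b - a) := by field_simp
  _ ≤ (10 * ‖p‖ + 8 * ‖q‖) / (b - a) := by
        gcongr (?_ : ℝ) / _
        have h1 : ‖p + q‖ ≤ ‖p‖ + ‖q‖ := norm_add_le _ _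
        have h2 : ‖2 * p + q‖ ≤ 2 * ‖p‖ + ‖q‖ := by
          calc ‖2 * p + q‖ ≤ ‖2 * p‖ + ‖q‖ := norm_add_le _ _
          _ = 2 * ‖p‖ + ‖q‖ := by rw [norm_mul]; norm_num
        linarith

lemma cubU'_left (a b : ℝ) (p q : ℂ) : cubU' a b p q a = p := by simp [cubU']

lemma cubU'_right {a b : ℝ} (hab : a < b) (p q : ℂ) : cubU' a b p q b = q := by
  have hdc : ((b - a : ℝ) : ℂ) ≠ 0 := by
    exact_mod_cast (sub_pos.mpr hab).ne'
  simp only [cubU', cubA, cubB]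
  generalize hD : ((b - a : ℝ) : ℂ) = D
  rw [hD] at hdc
  field_simp
  ring

lemma cubic_isDirDom {a b : ℝ} (hab : a < b) (p q : ℂ) :
    IsDirDom a b (cubU a b p q) (cubU' a b p q) (cubG a b p q) := by
  have hd : (0:ℝ) < b - a := sub_pos.mpr hab
  have hdc : ((b - a : ℝ) : ℂ) ≠ 0 := by exact_mod_cast hd.ne'
  haveI : IsFiniteMeasure (volume.restrict (Ioo a b)) :=
    ⟨by rw [Measure.restrict_apply_univ, Real.volume_Ioo]; exact ENNReal.ofReal_lt_top⟩
  refine ⟨fun y _ => (cubU_deriv a b p q y).hasDerivWithinAt, ?_, ?_, ?_, ?_⟩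
  · intro y _
    rw [intervalIntegral.integral_eq_sub_of_hasDerivAt
      (fun t _ => cubU'_deriv a b p q t) ((cubG_cont a b p q).intervalIntegrable a y)]
    ring
  · exact MemLp.of_bound (cubG_cont a b p q).aestronglyMeasurable
      ((10 * ‖p‖ + 8 * ‖q‖) / (b - a))
      ((ae_restrict_iff' measurableSet_Ioo).mpr
        (ae_of_all _ fun y hy => cubG_norm_le hab p q (Ioo_subset_Icc_self hy)))
  · simp [cubU]
  · show cubU a b p q b = 0
    simp only [cubU, cubA, cubB]
    generalize hD : ((b - a : ℝ) : ℂ) = D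
    rw [hD] at hdc
    field_simp
    ring

lemma cubG_int_bound {a b : ℝ} (hab : a < b) (p q : ℂ) :
    ∫ t in a..b, ‖cubG a b p q t‖ ^ 2 ≤ 200 * ((‖p‖ ^ 2 + ‖q‖ ^ 2) / (b - a)) := by
  have hd : (0:ℝ) < b - a := sub_pos.mpr hab
  have h1 : ∫ t in a..b, ‖cubG a b p q t‖ ^ 2
      ≤ ∫ _t in a..b, ((10 * ‖p‖ + 8 * ‖q‖) / (b - a)) ^ 2 :=
    intervalIntegral.integral_mono_on hab.le
      (((cubG_cont a b p q).norm.pow 2).intervalIntegrable a b)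
      (intervalIntegrable_const)
      (fun t ht => pow_le_pow_left₀ (norm_nonneg _) (cubG_norm_le hab p q ht) 2)
  rw [intervalIntegral.integral_const, smul_eq_mul] at h1
  refine h1.trans ?_
  have he : (b - a) * ((10 * ‖p‖ + 8 * ‖q‖) / (b - a)) ^ 2
      = (10 * ‖p‖ + 8 * ‖q‖) ^ 2 / (b - a) := by
    field_simp
  rw [he, mul_div_assoc' 200]
  gcongr
  nlinarith [sq_nonneg (10 * ‖p‖ - 8 * ‖q‖), norm_nonneg p, norm_nonneg q]

/-- For a strictly increasing sequence `x : ℕ → ℝ` with gaps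
`d n = x (n+1) − x n`, the direct sum of the trace maps
`τ_n u = (u'(x_n), −u'(x_{n+1}))` on the Dirichlet domains `D(A_n)` on `[x_n, x_{n+1}]`
(with the graph norm `‖u‖² = ∫ |u''|²`, i.e. `λ = 0`) is bounded and surjective onto
`ℓ²_d(ℕ) ⊕ ℓ²_d(ℕ)`, where `ℓ²_d(ℕ) = {s : Σ_n |s_n|²/d_n < ∞}`. Moreover
`ℓ²_d(ℕ) = ℓ²(ℕ)` with equivalent norms iff `0 < inf_n d_n ≤ sup_n d_n < ∞`. -/
theorem stmt_14 (x : ℕ → ℝ) (hx : StrictMono x) :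
    (∃ C : ℝ, 0 < C ∧ ∀ u u' g : ℕ → ℝ → ℂ,
      (∀ n, IsDirDom (x n) (x (n + 1)) (u n) (u' n) (g n)) →
      Summable (fun n => ∫ t in (x n)..(x (n + 1)), ‖g n t‖ ^ 2) →
      (Summable (fun n =>
          (‖u' n (x n)‖ ^ 2 + ‖u' n (x (n + 1))‖ ^ 2) / (x (n + 1) - x n)) ∧
        ∑' n, (‖u' n (x n)‖ ^ 2 + ‖u' n (x (n + 1))‖ ^ 2) / (x (n + 1) - x n)
          ≤ C ^ 2 * ∑' n, ∫ t in (x n)..(x (n + 1)), ‖g n t‖ ^ 2)) ∧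
    (∀ s t : ℕ → ℂ,
      Summable (fun n => (‖s n‖ ^ 2 + ‖t n‖ ^ 2) / (x (n + 1) - x n)) →
      ∃ u u' g : ℕ → ℝ → ℂ,
        (∀ n, IsDirDom (x n) (x (n + 1)) (u n) (u' n) (g n)) ∧
        Summable (fun n => ∫ t' in (x n)..(x (n + 1)), ‖g n t'‖ ^ 2) ∧
        ∀ n, u' n (x n) = s n ∧ -(u' n (x (n + 1))) = t n) ∧
    ((∃ c C : ℝ, 0 < c ∧ ∀ (s : ℕ → ℂ) (F : Finset ℕ),
        c * ∑ n ∈ F, ‖s n‖ ^ 2 ≤ ∑ n ∈ F, ‖s n‖ ^ 2 / (x (n + 1) - x n) ∧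
        ∑ n ∈ F, ‖s n‖ ^ 2 / (x (n + 1) - x n) ≤ C * ∑ n ∈ F, ‖s n‖ ^ 2) ↔
      ((∃ ε : ℝ, 0 < ε ∧ ∀ n, ε ≤ x (n + 1) - x n) ∧
        ∃ M : ℝ, ∀ n, x (n + 1) - x n ≤ M)) := by
  have hxn : ∀ n, x n < x (n + 1) := fun n => hx (Nat.lt_succ_self n)
  have hdn : ∀ n, (0:ℝ) < x (n + 1) - x n := fun n => sub_pos.mpr (hxn n)
  refine ⟨⟨3, by norm_num, fun u u' g hdom hsum => ?_⟩, fun s t hsum => ?_, ?_⟩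
  · -- boundedness
    have hb : ∀ n, (‖u' n (x n)‖ ^ 2 + ‖u' n (x (n + 1))‖ ^ 2) / (x (n + 1) - x n)
        ≤ 9 * ∫ t in (x n)..(x (n + 1)), ‖g n t‖ ^ 2 :=
      fun n => trace_bound (hxn n) (hdom n)
    have hnn : ∀ n, 0 ≤ (‖u' n (x n)‖ ^ 2 + ‖u' n (x (n + 1))‖ ^ 2) / (x (n + 1) - x n) :=
      fun n => div_nonneg (by positivity) (hdn n).le
    have hs9 : Summable (fun n => 9 * ∫ t in (x n)..(x (n + 1)), ‖g n t‖ ^ 2) :=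
      hsum.mul_left 9
    have hS := Summable.of_nonneg_of_le hnn hb hs9
    refine ⟨hS, ?_⟩
    calc ∑' n, (‖u' n (x n)‖ ^ 2 + ‖u' n (x (n + 1))‖ ^ 2) / (x (n + 1) - x n)
        ≤ ∑' n, 9 * ∫ t in (x n)..(x (n + 1)), ‖g n t‖ ^ 2 := Summable.tsum_le_tsum hb hS hs9
    _ = 9 * ∑' n, ∫ t in (x n)..(x (n + 1)), ‖g n t‖ ^ 2 := tsum_mul_left
    _ = 3 ^ 2 * ∑' n, ∫ t in (x n)..(x (n + 1)), ‖g n t‖ ^ 2 := by norm_num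
  · -- surjectivity
    refine ⟨fun n => cubU (x n) (x (n + 1)) (s n) (-(t n)),
      fun n => cubU' (x n) (x (n + 1)) (s n) (-(t n)),
      fun n => cubG (x n) (x (n + 1)) (s n) (-(t n)),
      fun n => cubic_isDirDom (hxn n) _ _, ?_,
      fun n => ⟨cubU'_left _ _ _ _, by
        show -(cubU' (x n) (x (n + 1)) (s n) (-(t n)) (x (n + 1))) = t n
        rw [cubU'_right (hxn n)]; ring⟩⟩
    have hb : ∀ n, ∫ t' in (x n)..(x (n + 1)), ‖cubG (x n) (x (n + 1)) (s n) (-(t n)) t'‖ ^ 2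
        ≤ 200 * ((‖s n‖ ^ 2 + ‖t n‖ ^ 2) / (x (n + 1) - x n)) := fun n => by
      have := cubG_int_bound (hxn n) (s n) (-(t n))
      simpa using this
    have hnn : ∀ n, 0 ≤ ∫ t' in (x n)..(x (n + 1)),
        ‖cubG (x n) (x (n + 1)) (s n) (-(t n)) t'‖ ^ 2 :=
      fun n => intervalIntegral.integral_nonneg (hxn n).le fun _ _ => sq_nonneg _
    exact Summable.of_nonneg_of_le hnn hb (hsum.mul_left 200)
  · -- equivalence of norms
    constructor
    · rintro ⟨c, C, hc, h⟩
      have key : ∀ n, c ≤ 1 / (x (n + 1) - x n) ∧ 1 / (x (n + 1) - x n) ≤ C := fun n => by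
        have := h (fun m => if m = n then 1 else 0) {n}
        simpa using this
      have hC : 0 < C := lt_of_lt_of_le (one_div_pos.mpr (hdn 0)) (key 0).2
      refine ⟨⟨1 / C, by positivity, fun n => ?_⟩, 1 / c, fun n => ?_⟩
      · have h2 := (key n).2
        rw [div_le_iff₀ (hdn n)] at h2
        rw [div_le_iff₀ hC]
        nlinarith
      · have h1 := (key n).1
        rw [le_div_iff₀ (hdn n)] at h1
        rw [le_div_iff₀ hc]
        nlinarith
    · rintro ⟨⟨ε, hε, hεle⟩, M, hM⟩
      have hMpos : 0 < M := lt_of_lt_of_le hε (le_trans (hεle 0) (hM 0))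
      refine ⟨1 / M, 1 / ε, by positivity, fun s F => ⟨?_, ?_⟩⟩
      · rw [Finset.mul_sum]
        refine Finset.sum_le_sum fun n _ => ?_
        rw [show 1 / M * ‖s n‖ ^ 2 = ‖s n‖ ^ 2 / M by ring]
        gcongr
        · exact hdn n
        · exact hM n
      · rw [Finset.mul_sum]
        refine Finset.sum_le_sum fun n _ => ?_
        rw [show 1 / ε * ‖s n‖ ^ 2 = ‖s n‖ ^ 2 / ε by ring]
        gcongr
        exact hεle n
end

section
/- Fix α ∈ (0,1) and k ∈ ℤ \ {0}. The function f_ξ(x) := ξ exp(−|k| x^{α+1}/(α+1)) is the unique solution in L²_w(ℝ₊) (with weight x^{−α}) of the boundary value problem f'' − (α/x) f' − k² x^{2α} f = 0, f(0) = ξ, and the corresponding number G_k*G_k = ∫₀^∞ exp(−2|k|x^{α+1}/(α+1)) x^{−α} dx = |k|^{(α−1)/(α+1)} ∫₀^∞ exp(−2x^{α+1}/(α+1)) x^{−α} dx. -/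
open MeasureTheory Set

/-- `f_ξ(x) = ξ exp(−|k| x^{α+1}/(α+1))`. -/
noncomputable def grushinSol (α : ℝ) (k : ℤ) (ξ : ℂ) (x : ℝ) : ℂ :=
  ξ * (Real.exp (-(|(k : ℝ)| * x ^ (α + 1) / (α + 1))) : ℂ)

noncomputable def gF (a α x : ℝ) : ℝ := Real.exp (-(a * x ^ (α + 1) / (α + 1)))

lemma hasDerivAt_gF {α : ℝ} (hα : 0 < α) (a x : ℝ) :
    HasDerivAt (gF a α) (-(a * x ^ α) * gF a α x) x := by
  have h1 : HasDerivAt (fun y : ℝ => y ^ (α + 1)) ((α + 1) * x ^ α) x := by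
    have := Real.hasDerivAt_rpow_const (x := x) (p := α + 1) (Or.inr (by linarith))
    simpa using this
  have h2 : HasDerivAt (fun y : ℝ => -(a * y ^ (α + 1) / (α + 1)))
      (-(a * ((α + 1) * x ^ α) / (α + 1))) x := ((h1.const_mul a).div_const _).neg
  have h3 := h2.exp
  have he : Real.exp (-(a * x ^ (α + 1) / (α + 1))) * (-(a * ((α + 1) * x ^ α) / (α + 1)))
      = -(a * x ^ α) * gF a α x := by
    unfold gF; field_simp
  rw [he] at h3
  exact h3

lemma hasDerivAt_gF' {α a x : ℝ} (hα : 0 < α) (hx : 0 < x) :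
    HasDerivAt (fun y => -(a * y ^ α) * gF a α y)
      (-(a * (α * x ^ (α - 1))) * gF a α x + -(a * x ^ α) * (-(a * x ^ α) * gF a α x)) x := by
  have h1 : HasDerivAt (fun y : ℝ => -(a * y ^ α)) (-(a * (α * x ^ (α - 1)))) x := by
    have := Real.hasDerivAt_rpow_const (x := x) (p := α) (Or.inl hx.ne')
    exact ((this.const_mul a).neg).congr_deriv (by ring)
  exact h1.mul (hasDerivAt_gF hα a x)

lemma gF_ode {α a x : ℝ} (hα : 0 < α) (hx : 0 < x) :
    (-(a * (α * x ^ (α - 1))) * gF a α x + -(a * x ^ α) * (-(a * x ^ α) * gF a α x))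
      - α / x * (-(a * x ^ α) * gF a α x) - a ^ 2 * x ^ (2 * α) * gF a α x = 0 := by
  have h2 : x ^ (2 * α) = x ^ α * x ^ α := by
    rw [← Real.rpow_add hx]; ring_nf
  have h1 : x ^ (α - 1) = x ^ α / x := by
    rw [Real.rpow_sub hx, Real.rpow_one]
  rw [h1, h2]
  field_simp
  ring

lemma gF_integrable {α : ℝ} (hα : α ∈ Ioo (0:ℝ) 1) {b : ℝ} (hb : 0 < b) :
    IntegrableOn (fun x : ℝ => Real.exp (-(b * x ^ (α + 1) / (α + 1))) * x ^ (-α)) (Ioi 0) := by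
  obtain ⟨hα0, hα1⟩ := hα
  have hmeas : AEStronglyMeasurable
      (fun x : ℝ => Real.exp (-(b * x ^ (α + 1) / (α + 1))) * x ^ (-α)) volume := by
    apply Measurable.aestronglyMeasurable
    have h1 : Measurable fun x : ℝ => x ^ (α + 1) := measurable_id.pow measurable_const
    have h2 : Measurable fun x : ℝ => x ^ (-α) := measurable_id.pow measurable_const
    exact (Real.measurable_exp.comp (((h1.const_mul b).div_const _).neg)).mul h2
  have hIoc : IntegrableOn (fun x : ℝ => Real.exp (-(b * x ^ (α + 1) / (α + 1))) * x ^ (-α))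
      (Ioc 0 1) := by
    have hint : IntegrableOn (fun x : ℝ => x ^ (-α)) (Ioc (0:ℝ) 1) := by
      have := intervalIntegral.intervalIntegrable_rpow' (a := 0) (b := 1) (r := -α)
        (by linarith)
      rwa [intervalIntegrable_iff_integrableOn_Ioc_of_le (by norm_num)] at this
    apply Integrable.mono' hint hmeas.restrict
    filter_upwards [ae_restrict_mem measurableSet_Ioc] with x hx
    have hx0 : 0 < x := hx.1
    rw [Real.norm_eq_abs, abs_of_nonneg (by positivity)]
    have h1 : Real.exp (-(b * x ^ (α + 1) / (α + 1))) ≤ 1 := by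
      apply Real.exp_le_one_iff.mpr
      have : (0:ℝ) ≤ b * x ^ (α + 1) / (α + 1) := by positivity
      linarith
    calc Real.exp (-(b * x ^ (α + 1) / (α + 1))) * x ^ (-α)
        ≤ 1 * x ^ (-α) := by
          apply mul_le_mul_of_nonneg_right h1 (by positivity)
      _ = x ^ (-α) := one_mul _
  have hIoi : IntegrableOn (fun x : ℝ => Real.exp (-(b * x ^ (α + 1) / (α + 1))) * x ^ (-α))
      (Ioi 1) := by
    have hint : IntegrableOn (fun x : ℝ => Real.exp (-(b / (α + 1)) * x)) (Ioi (1:ℝ)) :=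
      exp_neg_integrableOn_Ioi 1 (by positivity)
    apply Integrable.mono' hint hmeas.restrict
    filter_upwards [ae_restrict_mem measurableSet_Ioi] with x hx
    have hx1 : (1:ℝ) ≤ x := le_of_lt hx
    have hx0 : 0 < x := lt_of_lt_of_le one_pos hx1
    rw [Real.norm_eq_abs, abs_of_nonneg (by positivity)]
    have h2 : x ^ (-α) ≤ 1 :=
      Real.rpow_le_one_of_one_le_of_nonpos hx1 (by linarith)
    have h3 : x ≤ x ^ (α + 1) := by
      calc x = x ^ (1:ℝ) := (Real.rpow_one x).symm
        _ ≤ x ^ (α + 1) := Real.rpow_le_rpow_of_exponent_le hx1 (by linarith)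
    have h1 : Real.exp (-(b * x ^ (α + 1) / (α + 1))) ≤ Real.exp (-(b / (α + 1)) * x) := by
      apply Real.exp_le_exp.mpr
      rw [neg_mul, neg_le_neg_iff]
      rw [div_mul_eq_mul_div, div_le_div_iff_of_pos_right (by linarith)]
      exact mul_le_mul_of_nonneg_left h3 hb.le
    calc Real.exp (-(b * x ^ (α + 1) / (α + 1))) * x ^ (-α)
        ≤ Real.exp (-(b / (α + 1)) * x) * 1 :=
          mul_le_mul h1 h2 (by positivity) (Real.exp_nonneg _)
      _ = Real.exp (-(b / (α + 1)) * x) := mul_one _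
  have : Ioi (0:ℝ) = Ioc 0 1 ∪ Ioi 1 := (Ioc_union_Ioi_eq_Ioi (by norm_num)).symm
  rw [this]
  exact hIoc.union hIoi

lemma hasDerivAt_cG {α : ℝ} (hα : 0 < α) (a : ℝ) (ξ : ℂ) (x : ℝ) :
    HasDerivAt (fun y => ξ * ((gF a α y : ℝ) : ℂ))
      (ξ * ((-(a * x ^ α) * gF a α x : ℝ) : ℂ)) x :=
  ((hasDerivAt_gF hα a x).ofReal_comp).const_mul ξ

lemma deriv_cG {α : ℝ} (hα : 0 < α) (a : ℝ) (ξ : ℂ) :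
    deriv (fun y => ξ * ((gF a α y : ℝ) : ℂ))
      = fun x => ξ * ((-(a * x ^ α) * gF a α x : ℝ) : ℂ) :=
  funext fun x => (hasDerivAt_cG hα a ξ x).deriv

lemma hasDerivAt_cG' {α a : ℝ} (hα : 0 < α) {x : ℝ} (hx : 0 < x) (ξ : ℂ) :
    HasDerivAt (fun y => ξ * ((-(a * y ^ α) * gF a α y : ℝ) : ℂ))
      (ξ * ((-(a * (α * x ^ (α - 1))) * gF a α x
        + -(a * x ^ α) * (-(a * x ^ α) * gF a α x) : ℝ) : ℂ)) x :=
  ((hasDerivAt_gF' hα hx).ofReal_comp).const_mul ξ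

lemma part1 (α : ℝ) (hα : α ∈ Ioo (0:ℝ) 1) (k : ℤ) (hk : k ≠ 0) (ξ : ℂ) :
    (grushinSol α k ξ 0 = ξ ∧
      ContinuousOn (grushinSol α k ξ) (Ici 0) ∧
      (∀ x ∈ Ioi (0 : ℝ),
        HasDerivAt (grushinSol α k ξ) (deriv (grushinSol α k ξ) x) x ∧
        HasDerivAt (deriv (grushinSol α k ξ))
          (deriv (deriv (grushinSol α k ξ)) x) x ∧
        deriv (deriv (grushinSol α k ξ)) x
            - ((α / x : ℝ) : ℂ) * deriv (grushinSol α k ξ) x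
            - (k : ℂ) ^ 2 * ((x ^ (2 * α) : ℝ) : ℂ) * grushinSol α k ξ x = 0) ∧
      IntegrableOn (fun x => ‖grushinSol α k ξ x‖ ^ 2 * x ^ (-α)) (Ioi 0)) := by
  obtain ⟨hα0, hα1⟩ := hα
  set a : ℝ := |(k : ℝ)| with ha_def
  have ha : 0 < a := abs_pos.mpr (by exact_mod_cast hk)
  have hGdef : grushinSol α k ξ = fun x => ξ * ((gF a α x : ℝ) : ℂ) := rfl
  refine ⟨?_, ?_, ?_, ?_⟩
  · rw [hGdef]
    simp [gF, Real.zero_rpow (by positivity : α + 1 ≠ 0)]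
  · rw [hGdef]
    exact (continuous_iff_continuousAt.mpr fun x =>
      (hasDerivAt_cG hα0 a ξ x).continuousAt).continuousOn
  · intro x hx
    have hx0 : 0 < x := hx
    have hD1 := hasDerivAt_cG hα0 a ξ x
    have hderiv1 : deriv (grushinSol α k ξ) = fun x => ξ * ((-(a * x ^ α) * gF a α x : ℝ) : ℂ) := by
      rw [hGdef]; exact deriv_cG hα0 a ξ
    have hD2 := hasDerivAt_cG' hα0 hx0 ξ (a := a)
    have hderiv2 : deriv (deriv (grushinSol α k ξ)) x
        = ξ * ((-(a * (α * x ^ (α - 1))) * gF a α x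
          + -(a * x ^ α) * (-(a * x ^ α) * gF a α x) : ℝ) : ℂ) := by
      rw [hderiv1]; exact hD2.deriv
    refine ⟨?_, ?_, ?_⟩
    · rw [hGdef, deriv_cG hα0 a ξ]; exact hD1
    · rw [hderiv2, hderiv1]; exact hD2
    · rw [hderiv2, hderiv1, hGdef]
      have hk2 : ((k : ℂ)) ^ 2 = (((a ^ 2 : ℝ)) : ℂ) := by
        rw [ha_def]
        push_cast [sq_abs]
        ring
      rw [hk2]
      have key := gF_ode (a := a) (x := x) hα0 hx0
      have : ξ * ((-(a * (α * x ^ (α - 1))) * gF a α x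
            + -(a * x ^ α) * (-(a * x ^ α) * gF a α x) : ℝ) : ℂ)
          - ((α / x : ℝ) : ℂ) * (ξ * ((-(a * x ^ α) * gF a α x : ℝ) : ℂ))
          - (((a ^ 2 : ℝ)) : ℂ) * ((x ^ (2 * α) : ℝ) : ℂ) * (ξ * ((gF a α x : ℝ) : ℂ))
          = ξ * ((((-(a * (α * x ^ (α - 1))) * gF a α x
            + -(a * x ^ α) * (-(a * x ^ α) * gF a α x))
            - α / x * (-(a * x ^ α) * gF a α x) - a ^ 2 * x ^ (2 * α) * gF a α x : ℝ)) : ℂ) := by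
        push_cast
        ring
      rw [this, key]
      simp
  · have hfun : (fun x : ℝ => ‖grushinSol α k ξ x‖ ^ 2 * x ^ (-α))
        = fun x => ‖ξ‖ ^ 2 * (Real.exp (-(2 * a * x ^ (α + 1) / (α + 1))) * x ^ (-α)) := by
      funext x
      rw [hGdef]
      have he : gF a α x ^ 2 = Real.exp (-(2 * a * x ^ (α + 1) / (α + 1))) := by
        unfold gF; rw [sq, ← Real.exp_add]; congr 1; ring
      rw [show ‖ξ * ((gF a α x : ℝ) : ℂ)‖ = ‖ξ‖ * gF a α x by
        rw [norm_mul, Complex.norm_real, Real.norm_eq_abs, abs_of_pos (show (0:ℝ) < gF a α x from Real.exp_pos _)]]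
      rw [mul_pow, he]
      ring
    rw [hfun]
    exact (gF_integrable ⟨hα0, hα1⟩ (by positivity : (0:ℝ) < 2 * a)).const_mul _

lemma part3 (α : ℝ) (hα : α ∈ Ioo (0:ℝ) 1) (k : ℤ) (hk : k ≠ 0) :
    (∫ x in Ioi (0 : ℝ), Real.exp (-(2 * |(k : ℝ)| * x ^ (α + 1) / (α + 1))) * x ^ (-α))
      = |(k : ℝ)| ^ ((α - 1) / (α + 1)) *
        ∫ x in Ioi (0 : ℝ), Real.exp (-(2 * x ^ (α + 1) / (α + 1))) * x ^ (-α) := by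
  obtain ⟨hα0, hα1⟩ := hα
  set a : ℝ := |(k : ℝ)| with ha_def
  have ha : 0 < a := abs_pos.mpr (by exact_mod_cast hk)
  set c : ℝ := a ^ ((α + 1)⁻¹) with hc_def
  have hc : 0 < c := Real.rpow_pos_of_pos ha _
  have hca : c ^ (α + 1) = a := Real.rpow_inv_rpow ha.le (by positivity)
  set G : ℝ → ℝ := fun t => Real.exp (-(2 * t ^ (α + 1) / (α + 1))) * t ^ (-α) with hG_def
  have step1 : ∀ x ∈ Ioi (0:ℝ),
      Real.exp (-(2 * a * x ^ (α + 1) / (α + 1))) * x ^ (-α) = c ^ α * G (c * x) := by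
    intro x hx
    have hx0 : 0 < x := hx
    have h1 : (c * x) ^ (α + 1) = a * x ^ (α + 1) := by
      rw [Real.mul_rpow hc.le hx0.le, hca]
    have h2 : (c * x) ^ (-α) = c ^ (-α) * x ^ (-α) := Real.mul_rpow hc.le hx0.le
    rw [hG_def]
    simp only []
    rw [h1, h2]
    have h3 : c ^ α * (c ^ (-α)) = 1 := by
      rw [← Real.rpow_add hc]; simp
    calc Real.exp (-(2 * a * x ^ (α + 1) / (α + 1))) * x ^ (-α)
        = (c ^ α * c ^ (-α)) * (Real.exp (-(2 * (a * x ^ (α + 1)) / (α + 1))) * x ^ (-α)) := by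
          rw [h3]; ring_nf
      _ = c ^ α * (Real.exp (-(2 * (a * x ^ (α + 1)) / (α + 1))) * (c ^ (-α) * x ^ (-α))) := by
          ring
  rw [setIntegral_congr_fun measurableSet_Ioi step1]
  rw [MeasureTheory.integral_const_mul]
  rw [MeasureTheory.integral_comp_mul_left_Ioi G 0 hc]
  rw [mul_zero, smul_eq_mul, ← mul_assoc]
  congr 1
  rw [← Real.rpow_neg_one c, ← Real.rpow_add hc, show α + -1 = α - 1 by ring, hc_def,
    ← Real.rpow_mul ha.le]
  congr 1
  field_simp

lemma quad_le_exp {t : ℝ} (ht : 0 ≤ t) : t ^ 2 / 4 ≤ Real.exp t := by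
  have h1 : t / 2 + 1 ≤ Real.exp (t / 2) := Real.add_one_le_exp _
  have h2 : (t / 2) ^ 2 ≤ (t / 2 + 1) ^ 2 := by nlinarith
  have h3 : (t / 2 + 1) ^ 2 ≤ (Real.exp (t / 2)) ^ 2 := by nlinarith [Real.exp_pos (t / 2)]
  have h4 : (Real.exp (t / 2)) ^ 2 = Real.exp t := by
    rw [sq, ← Real.exp_add]; ring_nf
  nlinarith

lemma const_on_Ioi {f : ℝ → ℂ} (h : ∀ x ∈ Ioi (0:ℝ), HasDerivAt f 0 x) :
    ∀ x ∈ Ioi (0:ℝ), f x = f 1 := by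
  intro x hx
  have key := (convex_Ioi (0:ℝ)).norm_image_sub_le_of_norm_hasDerivWithin_le
    (f' := fun _ => (0:ℂ)) (C := 0) (fun z hz => (h z hz).hasDerivWithinAt)
    (fun z _ => by simp) (mem_Ioi.mpr one_pos) hx
  rw [zero_mul] at key
  exact sub_eq_zero.mp (norm_le_zero_iff.mp key)

lemma part2 (α : ℝ) (hα : α ∈ Ioo (0:ℝ) 1) (k : ℤ) (hk : k ≠ 0) (ξ : ℂ)
    (g : ℝ → ℂ) (hgc : ContinuousOn g (Ici 0)) (hg0 : g 0 = ξ)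
    (hode : ∀ x ∈ Ioi (0 : ℝ),
        HasDerivAt g (deriv g x) x ∧
        HasDerivAt (deriv g) (deriv (deriv g) x) x ∧
        deriv (deriv g) x - ((α / x : ℝ) : ℂ) * deriv g x
          - (k : ℂ) ^ 2 * ((x ^ (2 * α) : ℝ) : ℂ) * g x = 0)
    (hint : IntegrableOn (fun x => ‖g x‖ ^ 2 * x ^ (-α)) (Ioi 0)) :
    EqOn g (grushinSol α k ξ) (Ici 0) := by
  obtain ⟨hα0, hα1⟩ := hα
  set a : ℝ := |(k : ℝ)| with ha_def
  have ha : 0 < a := abs_pos.mpr (by exact_mod_cast hk)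
  have hk2 : ((k : ℂ)) ^ 2 = (((a ^ 2 : ℝ)) : ℂ) := by
    rw [ha_def]; push_cast [sq_abs]; ring
  -- the Wronskian
  set W : ℝ → ℂ := fun x => deriv g x * ((gF a α x : ℝ) : ℂ)
      - g x * ((-(a * x ^ α) * gF a α x : ℝ) : ℂ) with hW_def
  have hW : ∀ x ∈ Ioi (0:ℝ), HasDerivAt W (((α / x : ℝ) : ℂ) * W x) x := by
    intro x hx
    have hx0 : 0 < x := hx
    obtain ⟨h1, h2, hODE⟩ := hode x hx
    have hF := (hasDerivAt_gF hα0 a x).ofReal_comp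
    have hF2 := (hasDerivAt_gF' (a := a) hα0 hx0).ofReal_comp
    have hd : HasDerivAt W
        ((deriv (deriv g) x * ((gF a α x : ℝ) : ℂ)
          + deriv g x * ((-(a * x ^ α) * gF a α x : ℝ) : ℂ))
        - (deriv g x * ((-(a * x ^ α) * gF a α x : ℝ) : ℂ)
          + g x * ((-(a * (α * x ^ (α - 1))) * gF a α x
              + -(a * x ^ α) * (-(a * x ^ α) * gF a α x) : ℝ) : ℂ))) x :=
      (h2.mul hF).sub (h1.mul hF2)
    have hD2 : deriv (deriv g) x = ((α / x : ℝ) : ℂ) * deriv g x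
        + (((a ^ 2 : ℝ)) : ℂ) * ((x ^ (2 * α) : ℝ) : ℂ) * g x := by
      rw [← hk2]; linear_combination hODE
    have hreal : -(a * (α * x ^ (α - 1))) * gF a α x
        + -(a * x ^ α) * (-(a * x ^ α) * gF a α x)
        = α / x * (-(a * x ^ α) * gF a α x) + a ^ 2 * x ^ (2 * α) * gF a α x := by
      have := gF_ode (a := a) (x := x) hα0 hx0
      linarith
    refine hd.congr_deriv ?_
    rw [hD2, hreal, hW_def]
    push_cast
    ring
  -- x ^ (-α) * W is constant
  set V : ℝ → ℂ := fun x => ((x ^ (-α) : ℝ) : ℂ) * W x with hV_def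
  have hV : ∀ x ∈ Ioi (0:ℝ), HasDerivAt V 0 x := by
    intro x hx
    have hx0 : 0 < x := hx
    have hpow : HasDerivAt (fun y : ℝ => y ^ (-α)) (-α * x ^ (-α - 1)) x :=
      Real.hasDerivAt_rpow_const (Or.inl hx0.ne')
    have hd : HasDerivAt V
        (((-α * x ^ (-α - 1) : ℝ) : ℂ) * W x
          + ((x ^ (-α) : ℝ) : ℂ) * (((α / x : ℝ) : ℂ) * W x)) x :=
      (hpow.ofReal_comp).mul (hW x hx)
    refine hd.congr_deriv ?_
    have hr : -α * x ^ (-α - 1) + x ^ (-α) * (α / x) = 0 := by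
      have h1 : x ^ (-α - 1) = x ^ (-α) / x := by
        rw [Real.rpow_sub hx0, Real.rpow_one]
      rw [h1]; field_simp; ring
    have : ((-α * x ^ (-α - 1) : ℝ) : ℂ) + ((x ^ (-α) : ℝ) : ℂ) * ((α / x : ℝ) : ℂ)
        = 0 := by exact_mod_cast congrArg (fun t : ℝ => (t : ℂ)) hr
    calc ((-α * x ^ (-α - 1) : ℝ) : ℂ) * W x
          + ((x ^ (-α) : ℝ) : ℂ) * (((α / x : ℝ) : ℂ) * W x)
        = (((-α * x ^ (-α - 1) : ℝ) : ℂ) + ((x ^ (-α) : ℝ) : ℂ) * ((α / x : ℝ) : ℂ)) * W x := by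
          ring
      _ = 0 := by rw [this, zero_mul]
  set C : ℂ := V 1 with hC_def
  have hWc : ∀ x ∈ Ioi (0:ℝ), W x = C * ((x ^ α : ℝ) : ℂ) := by
    intro x hx
    have hx0 : 0 < x := hx
    have h1 : V x = C := const_on_Ioi hV x hx
    have h2 : (x ^ (-α) : ℝ) * (x ^ α : ℝ) = 1 := by
      rw [← Real.rpow_add hx0]; simp
    have := congrArg (fun t => ((x ^ α : ℝ) : ℂ) * t) h1
    simp only [hV_def] at this
    calc W x = (((x ^ (-α) : ℝ) * (x ^ α : ℝ) : ℝ) : ℂ) * W x := by rw [h2]; simp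
      _ = ((x ^ α : ℝ) : ℂ) * (((x ^ (-α) : ℝ) : ℂ) * W x) := by push_cast; ring
      _ = ((x ^ α : ℝ) : ℂ) * C := this
      _ = C * ((x ^ α : ℝ) : ℂ) := mul_comm _ _
  -- representation g = D₀ F + B Einv on Ioi 0
  set Einv : ℝ → ℝ := gF (-a) α with hEinv_def
  set E2 : ℝ → ℝ := gF (-(2*a)) α with hE2_def
  set B : ℂ := C / (2 * (a:ℂ)) with hB_def
  have hFE : ∀ x : ℝ, gF a α x * Einv x = 1 := by
    intro x
    rw [hEinv_def]
    unfold gF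
    rw [← Real.exp_add]
    norm_num
    ring
  have hE2eq : ∀ x : ℝ, Einv x * Einv x = E2 x := by
    intro x
    rw [hEinv_def, hE2_def]
    unfold gF
    rw [← Real.exp_add]
    congr 1
    ring
  have hE2F : ∀ x : ℝ, E2 x * gF a α x = Einv x := by
    intro x
    rw [hEinv_def, hE2_def]
    unfold gF
    rw [← Real.exp_add]
    congr 1
    ring
  set P : ℝ → ℂ := fun x => g x * ((Einv x : ℝ) : ℂ) with hP_def
  set Q : ℝ → ℂ := fun x => B * ((E2 x : ℝ) : ℂ) with hQ_def
  have hPQ : ∀ x ∈ Ioi (0:ℝ), HasDerivAt (fun y => P y - Q y) 0 x := by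
    intro x hx
    have hx0 : 0 < x := hx
    obtain ⟨h1, _, _⟩ := hode x hx
    have hE : HasDerivAt Einv (a * x ^ α * Einv x) x := by
      have := hasDerivAt_gF (a := -a) hα0 x
      rw [hEinv_def]
      exact this.congr_deriv (by ring)
    have hP' : HasDerivAt P (deriv g x * ((Einv x : ℝ) : ℂ)
        + g x * ((a * x ^ α * Einv x : ℝ) : ℂ)) x := h1.mul hE.ofReal_comp
    have hQ' : HasDerivAt Q (B * ((2 * a * x ^ α * E2 x : ℝ) : ℂ)) x := by
      have := (hasDerivAt_gF (a := -(2*a)) hα0 x).ofReal_comp.const_mul B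
      rw [hQ_def]
      exact this.congr_deriv (by push_cast; ring)
    have key : deriv g x * ((Einv x : ℝ) : ℂ) + g x * ((a * x ^ α * Einv x : ℝ) : ℂ)
        = B * ((2 * a * x ^ α * E2 x : ℝ) : ℂ) := by
      have hw := hWc x hx
      have expand : (deriv g x * ((gF a α x : ℝ) : ℂ)
            - g x * ((-(a * x ^ α) * gF a α x : ℝ) : ℂ))
            * (((Einv x : ℝ) : ℂ) * ((Einv x : ℝ) : ℂ))
          = (deriv g x * ((Einv x : ℝ) : ℂ) + g x * ((a * x ^ α * Einv x : ℝ) : ℂ))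
            * (((gF a α x : ℝ) : ℂ) * ((Einv x : ℝ) : ℂ)) := by
        push_cast; ring
      have hfe : ((gF a α x : ℝ) : ℂ) * ((Einv x : ℝ) : ℂ) = 1 := by
        rw [← Complex.ofReal_mul, hFE x, Complex.ofReal_one]
      rw [hfe, mul_one] at expand
      have hW_eq : W x * (((Einv x : ℝ) : ℂ) * ((Einv x : ℝ) : ℂ))
          = C * ((x ^ α : ℝ) : ℂ) * (((Einv x : ℝ) : ℂ) * ((Einv x : ℝ) : ℂ)) := by
        rw [hw]
      rw [hW_def] at hW_eq
      rw [← expand, hW_eq]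
      have he2 : ((Einv x : ℝ) : ℂ) * ((Einv x : ℝ) : ℂ) = ((E2 x : ℝ) : ℂ) := by
        rw [← Complex.ofReal_mul, hE2eq x]
      rw [he2, hB_def]
      have ha' : (2 * (a:ℂ)) ≠ 0 := by
        simp only [ne_eq, mul_eq_zero]
        push_neg
        exact ⟨two_ne_zero, by exact_mod_cast ha.ne'⟩
      field_simp
      push_cast
      have ha'' : (a:ℂ) ≠ 0 := by exact_mod_cast ha.ne'
      field_simp
    exact (hP'.sub hQ').congr_deriv (by rw [key]; ring)
  set D0 : ℂ := P 1 - Q 1 with hD0_def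
  have hrep : ∀ x ∈ Ioi (0:ℝ), g x = D0 * ((gF a α x : ℝ) : ℂ) + B * ((Einv x : ℝ) : ℂ) := by
    intro x hx
    have h1 : P x - Q x = D0 := const_on_Ioi hPQ x hx
    have h2 : P x = D0 + Q x := by linear_combination h1
    have hfe : ((gF a α x : ℝ) : ℂ) * ((Einv x : ℝ) : ℂ) = 1 := by
      rw [← Complex.ofReal_mul, hFE x, Complex.ofReal_one]
    have := congrArg (fun t => t * ((gF a α x : ℝ) : ℂ)) h2
    simp only [hP_def, hQ_def] at this
    calc g x = g x * (((Einv x : ℝ) : ℂ) * ((gF a α x : ℝ) : ℂ)) := by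
          rw [mul_comm ((Einv x : ℝ) : ℂ), hfe, mul_one]
      _ = g x * ((Einv x : ℝ) : ℂ) * ((gF a α x : ℝ) : ℂ) := by ring
      _ = (D0 + B * ((E2 x : ℝ) : ℂ)) * ((gF a α x : ℝ) : ℂ) := this
      _ = D0 * ((gF a α x : ℝ) : ℂ) + B * (((E2 x : ℝ) : ℂ) * ((gF a α x : ℝ) : ℂ)) := by ring
      _ = D0 * ((gF a α x : ℝ) : ℂ) + B * ((Einv x : ℝ) : ℂ) := by
          rw [← Complex.ofReal_mul, hE2F x]
  -- B must vanish
  have hBzero : B = 0 := by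
    by_contra hB0
    have hBpos : 0 < ‖B‖ := norm_pos_iff.mpr hB0
    set r : ℝ := a / (α + 1) with hr_def
    have hr : 0 < r := by positivity
    set M : ℝ := max 1 (4 * (1 + ‖D0‖) / (‖B‖ * r ^ 2)) with hM_def
    have hM1 : 1 ≤ M := le_max_left _ _
    have hlow : ∀ x ∈ Ioi M, (1:ℝ) ≤ ‖g x‖ ^ 2 * x ^ (-α) := by
      intro x hx
      have hxM : M ≤ x := le_of_lt hx
      have hx1 : 1 ≤ x := le_trans hM1 hxM
      have hx0 : 0 < x := lt_of_lt_of_le one_pos hx1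
      have hEinvx : Einv x = Real.exp (a * x ^ (α + 1) / (α + 1)) := by
        rw [hEinv_def]; unfold gF; congr 1; ring
      have hxp : x ≤ x ^ (α + 1) := by
        calc x = x ^ (1:ℝ) := (Real.rpow_one x).symm
          _ ≤ x ^ (α + 1) := Real.rpow_le_rpow_of_exponent_le hx1 (by linarith)
      have ht : r * x ≤ a * x ^ (α + 1) / (α + 1) := by
        rw [hr_def]
        rw [div_mul_eq_mul_div, div_le_div_iff_of_pos_right (by linarith)]
        exact mul_le_mul_of_nonneg_left hxp ha.le
      have hE1 : Real.exp (r * x) ≤ Einv x := by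
        rw [hEinvx]; exact Real.exp_le_exp.mpr ht
      have hquad : (r * x) ^ 2 / 4 ≤ Real.exp (r * x) := quad_le_exp (by positivity)
      have hFle : gF a α x ≤ 1 := by
        unfold gF
        apply Real.exp_le_one_iff.mpr
        have : (0:ℝ) ≤ a * x ^ (α + 1) / (α + 1) := by positivity
        linarith
      have hFpos : (0:ℝ) < gF a α x := Real.exp_pos _
      -- norm lower bound
      have hnorm : ‖B‖ * Einv x - ‖D0‖ * gF a α x ≤ ‖g x‖ := by
        rw [hrep x hx0]
        have h5 := norm_sub_norm_le (B * ((Einv x : ℝ) : ℂ)) (-(D0 * ((gF a α x : ℝ) : ℂ)))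
        rw [norm_neg, sub_neg_eq_add] at h5
        have e1 : ‖B * ((Einv x : ℝ) : ℂ)‖ = ‖B‖ * Einv x := by
          rw [norm_mul, Complex.norm_real, Real.norm_eq_abs,
            abs_of_pos (show (0:ℝ) < Einv x from Real.exp_pos _)]
        have e2 : ‖D0 * ((gF a α x : ℝ) : ℂ)‖ = ‖D0‖ * gF a α x := by
          rw [norm_mul, Complex.norm_real, Real.norm_eq_abs, abs_of_pos hFpos]
        rw [e1, e2] at h5
        calc ‖B‖ * Einv x - ‖D0‖ * gF a α x
            ≤ ‖B * ((Einv x : ℝ) : ℂ) + D0 * ((gF a α x : ℝ) : ℂ)‖ := h5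
          _ = ‖D0 * ((gF a α x : ℝ) : ℂ) + B * ((Einv x : ℝ) : ℂ)‖ := by rw [add_comm]
      have hM2 : 4 * (1 + ‖D0‖) / (‖B‖ * r ^ 2) ≤ x := le_trans (le_max_right _ _) hxM
      have hBr : 4 * (1 + ‖D0‖) ≤ ‖B‖ * r ^ 2 * x := by
        rw [div_le_iff₀ (by positivity)] at hM2
        linarith
      have hgx : x ≤ ‖g x‖ := by
        have c1 : ‖B‖ * ((r * x) ^ 2 / 4) ≤ ‖B‖ * Einv x :=
          mul_le_mul_of_nonneg_left (le_trans hquad hE1) hBpos.le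
        have c2 : (1 + ‖D0‖) * x ≤ ‖B‖ * ((r * x) ^ 2 / 4) := by
          have h' : 4 * (1 + ‖D0‖) * x ≤ ‖B‖ * r ^ 2 * x * x :=
            mul_le_mul_of_nonneg_right hBr hx0.le
          nlinarith [h']
        have c3 : ‖D0‖ * gF a α x ≤ ‖D0‖ := by
          calc ‖D0‖ * gF a α x ≤ ‖D0‖ * 1 :=
            mul_le_mul_of_nonneg_left hFle (norm_nonneg _)
            _ = ‖D0‖ := mul_one _
        have c4 : ‖D0‖ ≤ ‖D0‖ * x := le_mul_of_one_le_right (norm_nonneg _) hx1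
        linarith
      have hpow : x ^ (-1:ℝ) ≤ x ^ (-α) :=
        Real.rpow_le_rpow_of_exponent_le hx1 (by linarith)
      have hsq : x ^ 2 ≤ ‖g x‖ ^ 2 := pow_le_pow_left₀ hx0.le hgx 2
      have hfin : x ^ 2 * x ^ (-1:ℝ) ≤ ‖g x‖ ^ 2 * x ^ (-α) :=
        mul_le_mul hsq hpow (Real.rpow_nonneg hx0.le _) (by positivity)
      have hid : x ^ 2 * x ^ (-1:ℝ) = x := by
        rw [Real.rpow_neg_one]
        field_simp
      rw [hid] at hfin
      linarith
    have hMpos : 0 < M := lt_of_lt_of_le one_pos hM1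
    have hIntM : IntegrableOn (fun x => ‖g x‖ ^ 2 * x ^ (-α)) (Ioi M) :=
      hint.mono_set (Ioi_subset_Ioi hMpos.le)
    have hconst : IntegrableOn (fun _ : ℝ => (1:ℝ)) (Ioi M) := by
      apply Integrable.mono hIntM aestronglyMeasurable_const
      filter_upwards [ae_restrict_mem measurableSet_Ioi] with x hx
      have hx0 : 0 < x := lt_of_lt_of_le hMpos (le_of_lt hx)
      rw [norm_one, Real.norm_eq_abs, abs_of_nonneg (by positivity)]
      exact hlow x hx
    rw [integrableOn_const_iff] at hconst
    rcases hconst with h | h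
    · exact absurd h (by simp)
    · rw [Real.volume_Ioi] at h
      exact (lt_irrefl _ h).elim
  have hrep' : ∀ x ∈ Ioi (0:ℝ), g x = D0 * ((gF a α x : ℝ) : ℂ) := by
    intro x hx
    rw [hrep x hx, hBzero, zero_mul, add_zero]
  -- identify the constant via continuity at 0
  have hgtend : Filter.Tendsto g (nhdsWithin 0 (Ioi (0:ℝ))) (nhds ξ) := by
    have h1 : ContinuousWithinAt g (Ici 0) 0 := hgc 0 self_mem_Ici
    have h2 := h1.tendsto
    rw [hg0] at h2
    exact h2.mono_left (nhdsWithin_mono _ Ioi_subset_Ici_self)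
  have hftend : Filter.Tendsto (fun x => D0 * ((gF a α x : ℝ) : ℂ))
      (nhdsWithin 0 (Ioi (0:ℝ))) (nhds D0) := by
    have hc : Continuous fun x => D0 * ((gF a α x : ℝ) : ℂ) :=
      continuous_iff_continuousAt.mpr fun x => (hasDerivAt_cG hα0 a D0 x).continuousAt
    have h0 : gF a α 0 = 1 := by
      unfold gF
      rw [Real.zero_rpow (by positivity : α + 1 ≠ 0)]
      norm_num
    have := (hc.tendsto 0).mono_left (nhdsWithin_le_nhds (s := Ioi (0:ℝ)))
    rwa [h0, Complex.ofReal_one, mul_one] at this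
  have hgtend2 : Filter.Tendsto g (nhdsWithin 0 (Ioi (0:ℝ))) (nhds D0) := by
    apply hftend.congr'
    filter_upwards [self_mem_nhdsWithin] with x hx
    exact (hrep' x hx).symm
  have hD0 : D0 = ξ := tendsto_nhds_unique hgtend2 hgtend
  -- conclude
  intro x hx
  rcases eq_or_lt_of_le (mem_Ici.mp hx) with h0 | hxpos
  · rw [← h0, hg0]
    exact ((part1 α ⟨hα0, hα1⟩ k hk ξ).1).symm
  · rw [hrep' x hxpos, hD0]
    rfl

/-- Fix `α ∈ (0,1)` and `k ∈ ℤ \ {0}`. The function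
`f_ξ(x) = ξ exp(−|k| x^{α+1}/(α+1))` is the unique solution in the weighted space
`L²_w(ℝ₊)` (weight `x^{−α}`) of `f'' − (α/x) f' − k² x^{2α} f = 0` on `(0,∞)` with
`f(0) = ξ` (continuously at `0`), and
`G_k* G_k = ∫₀^∞ exp(−2|k|x^{α+1}/(α+1)) x^{−α} dx
  = |k|^{(α−1)/(α+1)} ∫₀^∞ exp(−2x^{α+1}/(α+1)) x^{−α} dx`. -/
theorem stmt_17 (α : ℝ) (hα : α ∈ Ioo (0 : ℝ) 1) (k : ℤ) (hk : k ≠ 0) (ξ : ℂ) :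
    -- `f_ξ` solves the boundary value problem and lies in `L²_w(ℝ₊)`:
    (grushinSol α k ξ 0 = ξ ∧
      ContinuousOn (grushinSol α k ξ) (Ici 0) ∧
      (∀ x ∈ Ioi (0 : ℝ),
        HasDerivAt (grushinSol α k ξ) (deriv (grushinSol α k ξ) x) x ∧
        HasDerivAt (deriv (grushinSol α k ξ))
          (deriv (deriv (grushinSol α k ξ)) x) x ∧
        deriv (deriv (grushinSol α k ξ)) x
            - ((α / x : ℝ) : ℂ) * deriv (grushinSol α k ξ) x
            - (k : ℂ) ^ 2 * ((x ^ (2 * α) : ℝ) : ℂ) * grushinSol α k ξ x = 0) ∧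
      IntegrableOn (fun x => ‖grushinSol α k ξ x‖ ^ 2 * x ^ (-α)) (Ioi 0)) ∧
    -- uniqueness:
    (∀ g : ℝ → ℂ, ContinuousOn g (Ici 0) → g 0 = ξ →
      (∀ x ∈ Ioi (0 : ℝ),
        HasDerivAt g (deriv g x) x ∧
        HasDerivAt (deriv g) (deriv (deriv g) x) x ∧
        deriv (deriv g) x - ((α / x : ℝ) : ℂ) * deriv g x
          - (k : ℂ) ^ 2 * ((x ^ (2 * α) : ℝ) : ℂ) * g x = 0) →
      IntegrableOn (fun x => ‖g x‖ ^ 2 * x ^ (-α)) (Ioi 0) →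
      EqOn g (grushinSol α k ξ) (Ici 0)) ∧
    -- the value of `G_k* G_k`:
    (∫ x in Ioi (0 : ℝ), Real.exp (-(2 * |(k : ℝ)| * x ^ (α + 1) / (α + 1))) * x ^ (-α))
      = |(k : ℝ)| ^ ((α - 1) / (α + 1)) *
        ∫ x in Ioi (0 : ℝ), Real.exp (-(2 * x ^ (α + 1) / (α + 1))) * x ^ (-α) := by
  exact ⟨part1 α hα k hk ξ,
    fun g hgc hg0 hode hint => part2 α hα k hk ξ g hgc hg0 hode hint,
    part3 α hα k hk⟩
end
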